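/- arXiv:1204.1671 — 4 statements merged into one kernel-verified Lean document; each statement's English description precedes it below -/
import Mathlib

section
/- Fix θ > 0 and n ≥ 2, and for a partition λ of n define β_λ(θ) = 1 − min(θ,1) + (θ·n(λᵗ) − n(λ)) / (max(θ,1)·C(n,2)), where n(ν) = Σ_i C(ν_i, 2). If λ = (λ₁, n − λ₁) with n/2 ≤ λ₁ ≤ n−1 (a two-row partition), then β_λ(θ) ≤ 1 − min(θ,1)·2λ₁(n−λ₁)/(n(n−1)). -/
open Finset

/-- The conjugate (transpose) partition. -/
def conjPart (n : ℕ) (l : ℕ → ℕ) (j : ℕ) : ℕ :=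
  ((Finset.range n).filter fun i => j < l i).card

/-- `Nstat n l = Σ_i C(l_i, 2)`; this is `n(λᵗ)` in Macdonald's notation. -/
def Nstat (n : ℕ) (l : ℕ → ℕ) : ℕ :=
  ∑ i ∈ Finset.range n, (l i).choose 2

/-- The eigenvalue `β_λ(θ) = 1 − min(θ,1) + (θ·n(λᵗ) − n(λ))/(max(θ,1)·C(n,2))`,
where `n(λᵗ) = Σ C(λ_i,2)` and `n(λ) = Σ C(λᵗ_i,2)`. -/
noncomputable def betaP (θ : ℝ) (n : ℕ) (l : ℕ → ℕ) : ℝ :=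
  1 - min θ 1 + (θ * (Nstat n l : ℝ) - (Nstat n (conjPart n l) : ℝ)) /
    (max θ 1 * (n.choose 2 : ℝ))

lemma Nstat_two_row (n l1 l2 : ℕ) (hn : 2 ≤ n) :
    Nstat n (fun k => if k = 0 then l1 else if k = 1 then l2 else 0)
      = l1.choose 2 + l2.choose 2 := by
  unfold Nstat
  rw [← Finset.sum_subset (s₁ := ({0,1} : Finset ℕ))]
  · simp
  · intro x hx; simp at hx ⊢; omega
  · intro x _ hx; simp at hx; simp [hx.1, hx.2]

lemma conj_two_row (n l1 l2 : ℕ) (hn : 2 ≤ n) (j : ℕ) :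
    conjPart n (fun k => if k = 0 then l1 else if k = 1 then l2 else 0) j
      = (if j < l1 then 1 else 0) + (if j < l2 then 1 else 0) := by
  unfold conjPart
  rw [Finset.card_filter]
  rw [← Finset.sum_subset (s₁ := ({0,1} : Finset ℕ))]
  · simp [Finset.filter_insert, Finset.filter_singleton]
    split_ifs <;> simp
  · intro x hx; simp at hx ⊢; omega
  · intro x _ hx; simp at hx; simp [hx.1, hx.2]

lemma Nstat_conj_two_row (n l1 l2 : ℕ) (hn : 2 ≤ n) (h21 : l2 ≤ l1) (h2n : l2 ≤ n) :
    Nstat n (conjPart n (fun k => if k = 0 then l1 else if k = 1 then l2 else 0)) = l2 := by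
  unfold Nstat
  have : ∀ j ∈ Finset.range n,
      (conjPart n (fun k => if k = 0 then l1 else if k = 1 then l2 else 0) j).choose 2
        = if j < l2 then 1 else 0 := by
    intro j _
    rw [conj_two_row n l1 l2 hn j]
    by_cases h2 : j < l2
    · have h1 : j < l1 := lt_of_lt_of_le h2 h21
      simp [h1, h2]
    · by_cases h1 : j < l1 <;> simp [h1, h2]
  rw [Finset.sum_congr rfl this]
  rw [← Finset.sum_subset (Finset.range_subset_range.2 h2n)]
  · rw [Finset.sum_ite_of_true (fun x hx => Finset.mem_range.1 hx)]
    simp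
  · intro x _ hx; simp at hx; simp; omega

lemma aux_expand (θ m M A B N S : ℝ) (hmM : m * M = θ) (hN : N ≠ 0)
    (h2S : 2 * S + 2 * A * B = N) :
    (m - m * (2 * A * B) / N) * (M * (N / 2)) = θ * S := by
  field_simp
  linear_combination (N - 2 * A * B) * hmM + (-θ) * h2S


set_option maxHeartbeats 1000000 in
/-- for the two-row partition `λ = (λ₁, n − λ₁)` with
`n/2 ≤ λ₁ ≤ n − 1`, one has `β_λ(θ) ≤ 1 − min(θ,1)·2λ₁(n−λ₁)/(n(n−1))`. -/
theorem beta_two_row_bound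
    (θ : ℝ) (hθ : 0 < θ) (n : ℕ) (hn : 2 ≤ n) (l1 : ℕ)
    (hhalf : (n : ℝ) / 2 ≤ (l1 : ℝ)) (hl1 : l1 ≤ n - 1) :
    betaP θ n (fun k => if k = 0 then l1 else if k = 1 then n - l1 else 0)
      ≤ 1 - min θ 1 * (2 * (l1 : ℝ) * ((n : ℝ) - l1)) / ((n : ℝ) * ((n : ℝ) - 1)) := by
  set l2 := n - l1 with hl2
  have hnl : 2 * l1 ≥ n := by
    have : (n : ℝ) ≤ 2 * l1 := by linarith
    exact_mod_cast this
  have h1n : l1 ≤ n := by omega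
  have h21 : l2 ≤ l1 := by omega
  have h2n : l2 ≤ n := by omega
  have hadd : l1 + l2 = n := by omega
  unfold betaP
  rw [Nstat_two_row n l1 l2 hn, Nstat_conj_two_row n l1 l2 hn h21 h2n]
  -- real setup
  have hA : (0:ℝ) ≤ (l1 : ℝ) := by positivity
  have hB : (0:ℝ) ≤ (l2 : ℝ) := by positivity
  have hAB : (l1 : ℝ) + (l2 : ℝ) = n := by exact_mod_cast hadd
  have hBeq : ((n : ℝ) - l1) = (l2 : ℝ) := by linarith
  rw [hBeq]
  have hC : (n.choose 2 : ℝ) = (n : ℝ) * ((n : ℝ) - 1) / 2 := by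
    rw [Nat.cast_choose_two]
  have hc1 : ((l1.choose 2 : ℕ) : ℝ) = (l1 : ℝ) * ((l1 : ℝ) - 1) / 2 := by
    rw [Nat.cast_choose_two]
  have hc2 : ((l2.choose 2 : ℕ) : ℝ) = (l2 : ℝ) * ((l2 : ℝ) - 1) / 2 := by
    rw [Nat.cast_choose_two]
  push_cast [hc1, hc2, hC]
  have hM : (0:ℝ) < max θ 1 := lt_of_lt_of_le one_pos (le_max_right _ _)
  have hm : (0:ℝ) < min θ 1 := lt_min hθ one_pos
  have hmM : min θ 1 * max θ 1 = θ := by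
    rcases le_total θ 1 with h | h <;> simp [min_eq_left, max_eq_right, min_eq_right,
      max_eq_left, h] <;> ring
  have hnn : (0:ℝ) < (n : ℝ) * ((n : ℝ) - 1) := by
    have : (2:ℝ) ≤ n := by exact_mod_cast hn
    nlinarith
  set S : ℝ := (l1 : ℝ) * ((l1 : ℝ) - 1) / 2 + (l2 : ℝ) * ((l2 : ℝ) - 1) / 2 with hS
  have hSnn : 0 ≤ S := by
    have h1 : (0:ℝ) ≤ (l1:ℝ) * ((l1:ℝ) - 1) := by
      rcases Nat.eq_zero_or_pos l1 with h | h
      · simp [h]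
      · have : (1:ℝ) ≤ l1 := by exact_mod_cast h
        nlinarith
    have h2 : (0:ℝ) ≤ (l2:ℝ) * ((l2:ℝ) - 1) := by
      rcases Nat.eq_zero_or_pos l2 with h | h
      · simp [h]
      · have : (1:ℝ) ≤ l2 := by exact_mod_cast h
        nlinarith
    rw [hS]; linarith
  have key : (θ * S - (l2:ℝ)) / (max θ 1 * ((n:ℝ) * ((n:ℝ) - 1) / 2))
      ≤ min θ 1 - min θ 1 * (2 * (l1:ℝ) * (l2:ℝ)) / ((n:ℝ) * ((n:ℝ) - 1)) := by
    have hiden : (0:ℝ) < max θ 1 * ((n:ℝ) * ((n:ℝ) - 1) / 2) := by positivity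
    have h2S : 2 * S + 2 * (l1:ℝ) * (l2:ℝ) = (n:ℝ) * ((n:ℝ) - 1) := by
      rw [hS]; linear_combination ((l1:ℝ) + (l2:ℝ) + (n:ℝ) - 1) * hAB
    rw [div_le_iff₀ hiden]
    have expand : (min θ 1 - min θ 1 * (2 * (l1:ℝ) * (l2:ℝ)) / ((n:ℝ) * ((n:ℝ) - 1)))
        * (max θ 1 * ((n:ℝ) * ((n:ℝ) - 1) / 2)) = θ * S :=
      aux_expand θ (min θ 1) (max θ 1) (l1:ℝ) (l2:ℝ) ((n:ℝ) * ((n:ℝ) - 1)) S hmM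
        (ne_of_gt hnn) h2S
    rw [expand]
    linarith
  calc 1 - min θ 1 + (θ * S - (l2:ℝ)) / (max θ 1 * ((n:ℝ) * ((n:ℝ) - 1) / 2))
      ≤ 1 - min θ 1 + (min θ 1 - min θ 1 * (2 * (l1:ℝ) * (l2:ℝ)) / ((n:ℝ) * ((n:ℝ) - 1))) := by
        linarith
    _ = 1 - min θ 1 * (2 * (l1:ℝ) * (l2:ℝ)) / ((n:ℝ) * ((n:ℝ) - 1)) := by ring
end

section
/- Fix θ > 0 and n ≥ 2, and for a partition λ of n define β_λ(θ) = 1 − min(θ,1) + (θ·n(λᵗ) − n(λ))/(max(θ,1)·C(n,2)). Then β_λ(θ) ≤ 1 − min(θ,1)·(1 − (λ₁ − 1)/(n − 1)), where λ₁ is the largest part of λ. -/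
open Finset

/-- `l` represents a partition of `n`: weakly decreasing, supported on `{0, …, n−1}`,
with parts summing to `n`. -/
def IsPartitionOf (n : ℕ) (l : ℕ → ℕ) : Prop :=
  Antitone l ∧ (∀ i, n ≤ i → l i = 0) ∧ ∑ i ∈ Finset.range n, l i = n

/-- for any partition `λ` of `n` with largest part `λ₁ = l 0`,
`β_λ(θ) ≤ 1 − min(θ,1)·(1 − (λ₁ − 1)/(n − 1))`. -/
theorem beta_general_bound
    (θ : ℝ) (hθ : 0 < θ) (n : ℕ) (hn : 2 ≤ n) (l : ℕ → ℕ)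
    (hl : IsPartitionOf n l) :
    betaP θ n l ≤ 1 - min θ 1 * (1 - ((l 0 : ℝ) - 1) / ((n : ℝ) - 1)) := by
  obtain ⟨hanti, -, hsum⟩ := hl
  set m := min θ 1 with hm
  set M := max θ 1 with hM
  have hMpos : 0 < M := lt_max_of_lt_right one_pos
  have hmM : m * M = θ := by
    rw [hm, hM, min_mul_max, mul_one]
  have hn2 : (2 : ℝ) ≤ (n : ℝ) := by exact_mod_cast hn
  have hCpos : (0 : ℝ) < (n.choose 2 : ℝ) := by
    exact_mod_cast Nat.choose_pos hn
  have hC : (n.choose 2 : ℝ) = (n : ℝ) * ((n : ℝ) - 1) / 2 := Nat.cast_choose_two (K := ℝ) n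
  -- bound on Nstat n l
  have hA : (Nstat n l : ℝ) ≤ ((l 0 : ℝ) - 1) * (n : ℝ) / 2 := by
    have hterm : ∀ i ∈ Finset.range n,
        ((l i).choose 2 : ℝ) ≤ ((l 0 : ℝ) - 1) * (l i : ℝ) / 2 := by
      intro i _
      rw [Nat.cast_choose_two]
      have h1 : (l i : ℝ) ≤ (l 0 : ℝ) := by
        exact_mod_cast hanti (Nat.zero_le i)
      have h2 : (0 : ℝ) ≤ (l i : ℝ) := Nat.cast_nonneg _
      nlinarith
    calc (Nstat n l : ℝ) = ∑ i ∈ Finset.range n, ((l i).choose 2 : ℝ) := by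
          rw [Nstat]; push_cast; ring
      _ ≤ ∑ i ∈ Finset.range n, ((l 0 : ℝ) - 1) * (l i : ℝ) / 2 :=
          Finset.sum_le_sum hterm
      _ = ((l 0 : ℝ) - 1) * (n : ℝ) / 2 := by
          rw [← Finset.sum_div, ← Finset.mul_sum]
          congr 2
          exact_mod_cast hsum
  have hB : (0 : ℝ) ≤ (Nstat n (conjPart n l) : ℝ) := Nat.cast_nonneg _
  have hmain : (θ * (Nstat n l : ℝ) - (Nstat n (conjPart n l) : ℝ)) /
      (M * (n.choose 2 : ℝ)) ≤ m * (((l 0 : ℝ) - 1) / ((n : ℝ) - 1)) := by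
    rw [div_le_iff₀ (by positivity)]
    have key : m * (((l 0 : ℝ) - 1) / ((n : ℝ) - 1)) * (M * (n.choose 2 : ℝ))
        = θ * (((l 0 : ℝ) - 1) * (n : ℝ) / 2) := by
      rw [hC]
      have hne : (n : ℝ) - 1 ≠ 0 := by linarith
      field_simp
      linear_combination ((l 0:ℝ) - 1) * hmM
    rw [key]
    have : θ * (Nstat n l : ℝ) ≤ θ * (((l 0 : ℝ) - 1) * (n : ℝ) / 2) :=
      mul_le_mul_of_nonneg_left hA hθ.le
    linarith
  rw [betaP]
  have : 1 - m * (1 - ((l 0 : ℝ) - 1) / ((n : ℝ) - 1))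
      = 1 - m + m * (((l 0 : ℝ) - 1) / ((n : ℝ) - 1)) := by ring
  rw [this]
  linarith
end

section
/- Fix θ > 0 and n ≥ 2, and for a partition λ of n define β_λ(θ) = 1 − min(θ,1) + (θ·n(λᵗ) − n(λ))/(max(θ,1)·C(n,2)). If β_λ(θ) < 0, then β_{λᵗ}(θ) ≥ |β_λ(θ)|; in particular β_{λᵗ}(θ) > 0. -/
open Finset

lemma choose_two_add_le (a b : ℕ) : a.choose 2 + b.choose 2 ≤ (a+b).choose 2 := by
  induction b with
  | zero => simp
  | succ b ih =>
    have h1 : (b+1).choose 2 = b.choose 1 + b.choose 2 := Nat.choose_succ_succ b 1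
    have h2 : (a+(b+1)).choose 2 = (a+b).choose 1 + (a+b).choose 2 := by
      rw [show a+(b+1) = (a+b)+1 by ring]; exact Nat.choose_succ_succ (a+b) 1
    simp [Nat.choose_one_right] at h1 h2
    omega

lemma sum_choose_two_le (s : Finset ℕ) (f : ℕ → ℕ) :
    ∑ i ∈ s, (f i).choose 2 ≤ (∑ i ∈ s, f i).choose 2 := by
  induction s using Finset.cons_induction with
  | empty => simp
  | cons a s ha ih =>
    rw [Finset.sum_cons, Finset.sum_cons]
    calc (f a).choose 2 + ∑ i ∈ s, (f i).choose 2
        ≤ (f a).choose 2 + (∑ i ∈ s, f i).choose 2 := by omega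
      _ ≤ (f a + ∑ i ∈ s, f i).choose 2 := choose_two_add_le _ _

lemma conj_lt_iff {n : ℕ} {l : ℕ → ℕ} (hl : Antitone l) {i : ℕ} (hi : i < n) (j : ℕ) :
    i < conjPart n l j ↔ j < l i := by
  constructor
  · intro h
    by_contra hj
    push_neg at hj
    have hsub : (Finset.range n).filter (fun k => j < l k) ⊆ Finset.range i := by
      intro k hk
      simp only [mem_filter, mem_range] at hk ⊢
      by_contra hki
      push_neg at hki
      exact absurd (lt_of_lt_of_le hk.2 ((hl hki).trans hj)) (lt_irrefl j)
    have hc := Finset.card_le_card hsub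
    rw [Finset.card_range] at hc
    simp only [conjPart] at h
    omega
  · intro h
    have hsub : Finset.range (i+1) ⊆ (Finset.range n).filter (fun k => j < l k) := by
      intro k hk
      simp only [mem_range] at hk
      simp only [mem_filter, mem_range]
      exact ⟨lt_of_lt_of_le hk hi, lt_of_lt_of_le h (hl (by omega))⟩
    have := Finset.card_le_card hsub
    simpa [conjPart] using this

lemma conj_le {n : ℕ} (l : ℕ → ℕ) (j : ℕ) : conjPart n l j ≤ n := by
  simpa [conjPart] using Finset.card_filter_le (Finset.range n) _

lemma part_le {n : ℕ} {l : ℕ → ℕ} (hl : IsPartitionOf n l) {i : ℕ} (hi : i < n) :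
    l i ≤ n := by
  obtain ⟨ha, hz, hs⟩ := hl
  calc l i ≤ ∑ k ∈ Finset.range n, l k :=
        Finset.single_le_sum (fun k _ => Nat.zero_le _) (Finset.mem_range.2 hi)
    _ = n := hs

lemma conj_conj {n : ℕ} {l : ℕ → ℕ} (hl : IsPartitionOf n l) :
    conjPart n (conjPart n l) = l := by
  funext i
  by_cases hi : i < n
  · have hle : l i ≤ n := part_le hl hi
    have : (Finset.range n).filter (fun j => i < conjPart n l j)
        = Finset.range (l i) := by
      ext j
      simp only [mem_filter, mem_range]
      constructor
      · intro ⟨hj, h⟩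
        exact (conj_lt_iff hl.1 hi j).1 h
      · intro h
        exact ⟨lt_of_lt_of_le h hle, (conj_lt_iff hl.1 hi j).2 h⟩
    simp only [conjPart] at this ⊢
    rw [this, Finset.card_range]
  · push_neg at hi
    have h0 : l i = 0 := hl.2.1 i hi
    have : (Finset.range n).filter (fun j => i < conjPart n l j) = ∅ := by
      apply Finset.filter_false_of_mem
      intro j _
      have := conj_le (n := n) l j
      omega
    simp only [conjPart] at this ⊢
    rw [this, Finset.card_empty, h0]

lemma conj_sum {n : ℕ} {l : ℕ → ℕ} (hl : IsPartitionOf n l) :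
    ∑ j ∈ Finset.range n, conjPart n l j = n := by
  have : ∑ j ∈ Finset.range n, conjPart n l j
      = ∑ j ∈ Finset.range n, ∑ i ∈ Finset.range n, if j < l i then 1 else 0 := by
    refine Finset.sum_congr rfl fun j _ => ?_
    simp only [conjPart]
    rw [Finset.card_filter]
  rw [this, Finset.sum_comm]
  have : ∀ i ∈ Finset.range n,
      (∑ j ∈ Finset.range n, if j < l i then 1 else 0) = l i := by
    intro i hi
    have hle : l i ≤ n := part_le hl (Finset.mem_range.1 hi)
    have : (Finset.range n).filter (fun j => j < l i) = Finset.range (l i) := by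
      ext j; simp only [mem_filter, mem_range]; omega
    rw [← Finset.card_filter, this, Finset.card_range]
  rw [Finset.sum_congr rfl this, hl.2.2]

lemma Nstat_le {n : ℕ} {f : ℕ → ℕ} (hs : ∑ i ∈ Finset.range n, f i = n) :
    Nstat n f ≤ n.choose 2 := by
  have := sum_choose_two_le (Finset.range n) f
  rwa [hs] at this

/-- if `β_λ(θ) < 0` then `β_{λᵗ}(θ) ≥ |β_λ(θ)|`; in particular
`β_{λᵗ}(θ) > 0`. -/
theorem beta_conjugate_dominates
    (θ : ℝ) (hθ : 0 < θ) (n : ℕ) (hn : 2 ≤ n) (l : ℕ → ℕ)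
    (hl : IsPartitionOf n l)
    (hneg : betaP θ n l < 0) :
    |betaP θ n l| ≤ betaP θ n (conjPart n l) ∧ 0 < betaP θ n (conjPart n l) := by
  set A : ℝ := (Nstat n l : ℝ) with hAdef
  set B : ℝ := (Nstat n (conjPart n l) : ℝ) with hBdef
  set C : ℝ := (n.choose 2 : ℝ) with hCdef
  have hC : (0:ℝ) < C := by
    have : 1 ≤ n.choose 2 := Nat.succ_le_of_lt (Nat.choose_pos hn)
    rw [hCdef]; exact_mod_cast this
  have hA0 : (0:ℝ) ≤ A := Nat.cast_nonneg _
  have hB0 : (0:ℝ) ≤ B := Nat.cast_nonneg _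
  have hA : A ≤ C := by
    rw [hAdef, hCdef]; exact_mod_cast Nstat_le hl.2.2
  have hB : B ≤ C := by
    rw [hBdef, hCdef]; exact_mod_cast Nstat_le (conj_sum hl)
  have hrw : betaP θ n (conjPart n l)
      = 1 - min θ 1 + (θ * B - A) / (max θ 1 * C) := by
    rw [betaP, conj_conj hl]
  have hl' : betaP θ n l = 1 - min θ 1 + (θ * A - B) / (max θ 1 * C) := rfl
  have key : 0 ≤ 2 * (1 - min θ 1)
      + ((θ * B - A) + (θ * A - B)) / (max θ 1 * C) := by
    rcases le_total θ 1 with h1 | h1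
    · rw [min_eq_left h1, max_eq_right h1, one_mul]
      have hd : (A + B) / C ≤ 2 := by
        rw [div_le_iff₀ hC]; linarith
      have hd0 : 0 ≤ (A + B) / C := div_nonneg (by linarith) hC.le
      have heq : ((θ * B - A) + (θ * A - B)) / C = (θ - 1) * ((A + B) / C) := by
        field_simp; ring
      rw [heq]
      nlinarith [mul_nonneg (by linarith : (0:ℝ) ≤ 1 - θ) (by linarith : (0:ℝ) ≤ 2 - (A + B) / C)]
    · rw [min_eq_right h1, max_eq_left h1]
      have : (0:ℝ) ≤ ((θ * B - A) + (θ * A - B)) / (θ * C) := by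
        apply div_nonneg _ (mul_nonneg hθ.le hC.le)
        nlinarith [mul_nonneg (by linarith : (0:ℝ) ≤ θ - 1) (by linarith : (0:ℝ) ≤ A + B)]
      simp only [sub_self]
      linarith
  have hsum : -(betaP θ n l) ≤ betaP θ n (conjPart n l) := by
    rw [hrw, hl']
    have := add_div (θ * B - A) (θ * A - B) (max θ 1 * C)
    linarith [key, this]
  constructor
  · rw [abs_of_neg hneg]; exact hsum
  · linarith
end

section
/- Fix θ > 0. For a partition λ of n, define j_λ(θ) = ∏_{s∈λ} ((a(s)+1)θ + ℓ(s)) · (a(s)θ + ℓ(s) + 1), where a(s) and ℓ(s) are the arm and leg lengths of the cell s. If λ = (λ₁, λ₂, …) and μ = (λ₂, λ₃, …) is the partition obtained by removing the first row, then j_λ(θ) ≥ (λ₁!)² · θ^{2λ₁ − 1} · λ₁^{1/θ − 1} · exp(−π²/(12θ²)) · j_μ(θ). -/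
open Finset Real

/-- `j_λ(θ) = ∏_{s∈λ} ((a(s)+1)θ + ℓ(s)) (a(s)θ + ℓ(s) + 1)`, where for the cell
`s = (i,j)` (0-indexed) the arm length is `a(s) = l i − j − 1` and the leg length is
`ℓ(s) = λᵗ_j − i − 1`. -/
noncomputable def jfun (θ : ℝ) (n : ℕ) (l : ℕ → ℕ) : ℝ :=
  ∏ i ∈ Finset.range n, ∏ j ∈ Finset.range (l i),
    ((((l i : ℝ) - j - 1) + 1) * θ + ((conjPart n l j : ℝ) - i - 1)) *
      (((l i : ℝ) - j - 1) * θ + ((conjPart n l j : ℝ) - i - 1) + 1)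

/-! ### Auxiliary analytic lemmas -/

lemma log_quad {t : ℝ} (ht : 0 ≤ t) : t - t^2/2 ≤ Real.log (1+t) := by
  have key : MonotoneOn (fun t : ℝ => Real.log (1+t) - (t - t^2/2)) (Set.Ici 0) := by
    apply monotoneOn_of_deriv_nonneg (convex_Ici 0)
    · apply ContinuousOn.sub
      · apply ContinuousOn.log (by fun_prop)
        intro x hx
        have : (0:ℝ) ≤ x := hx
        positivity
      · fun_prop
    · intro x hx
      have hx0 : (0:ℝ) < x := by simpa using hx
      have h1 : HasDerivAt (fun t : ℝ => 1 + t) 1 x := by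
        simpa using (hasDerivAt_id x).const_add 1
      have h2 : HasDerivAt (fun t : ℝ => Real.log (1+t)) ((1+x)⁻¹) x := by
        exact ((Real.hasDerivAt_log (by positivity)).comp x h1).congr_deriv (by simp)
      have h3 : HasDerivAt (fun t : ℝ => t - t^2/2) (1 - x) x := by
        have := ((hasDerivAt_id x).sub (((hasDerivAt_pow 2 x)).div_const 2))
        exact this.congr_deriv (by norm_num)
      exact (h2.sub h3).differentiableAt.differentiableWithinAt
    · intro x hx
      have hx0 : (0:ℝ) < x := by simpa [interior_Ici] using hx
      have h1 : HasDerivAt (fun t : ℝ => 1 + t) 1 x := by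
        simpa using (hasDerivAt_id x).const_add 1
      have h2 : HasDerivAt (fun t : ℝ => Real.log (1+t)) ((1+x)⁻¹) x := by
        exact ((Real.hasDerivAt_log (by positivity)).comp x h1).congr_deriv (by simp)
      have h3 : HasDerivAt (fun t : ℝ => t - t^2/2) (1 - x) x := by
        have := ((hasDerivAt_id x).sub (((hasDerivAt_pow 2 x)).div_const 2))
        exact this.congr_deriv (by norm_num)
      rw [HasDerivAt.deriv (f := fun t => Real.log (1+t) - (t - t^2/2)) (h2.sub h3)]
      have hpos : (0:ℝ) < 1 + x := by linarith
      have hu : (1+x)⁻¹ * (1+x) = 1 := inv_mul_cancel₀ (ne_of_gt hpos)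
      nlinarith [sq_nonneg x, inv_nonneg.2 hpos.le]
  have h0 : (0:ℝ) ∈ Set.Ici (0:ℝ) := Set.self_mem_Ici
  have := key h0 ht ht
  simp at this
  linarith

lemma log_le_harmonic (m : ℕ) : Real.log (m+1) ≤ ∑ i ∈ Finset.range m, (1:ℝ)/(i+1) := by
  induction m with
  | zero => simp
  | succ m ih =>
    rw [Finset.sum_range_succ]
    have h1 : Real.log (m+1+1) = Real.log (m+1) + Real.log ((m+2)/(m+1)) := by
      rw [← Real.log_mul (by positivity) (by positivity)]
      congr 1
      field_simp
      ring
    have h2 : Real.log ((m+2:ℝ)/(m+1)) ≤ (m+2)/(m+1) - 1 :=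
      Real.log_le_sub_one_of_pos (by positivity)
    have h3 : ((m:ℝ)+2)/(m+1) - 1 = 1/(m+1) := by
      rw [div_sub_one (by positivity)]
      ring_nf
    push_cast
    push_cast at ih h1
    linarith [h1, h2, h3, ih]

lemma sum_inv_sq_le (m : ℕ) : ∑ i ∈ Finset.range m, (1:ℝ)/(i+1)^2 ≤ π^2/6 := by
  have hs : HasSum (fun n : ℕ => (1 : ℝ) / (n : ℝ) ^ 2) (π ^ 2 / 6) := hasSum_zeta_two
  have h1 : ∑ i ∈ Finset.range m, (1:ℝ)/(i+1)^2 = ∑ i ∈ Finset.range (m+1), (1:ℝ)/(i:ℝ)^2 := by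
    rw [Finset.sum_range_succ']
    simp
  rw [h1]
  exact sum_le_hasSum _ (fun i _ => by positivity) hs

lemma keyC (θ : ℝ) (hθ : 0 < θ) (m : ℕ) (hm : 1 ≤ m) :
    (m.factorial : ℝ)^2 * θ ^ (2*(m:ℝ) - 1) * (m:ℝ) ^ (1/θ - 1) * Real.exp (-(π^2)/(12*θ^2))
      ≤ (m.factorial : ℝ) * θ^m * ∏ i ∈ Finset.range m, ((i:ℝ)*θ + 1) := by
  set x : ℝ := 1/θ with hx
  have hx0 : 0 < x := by positivity
  set k := m - 1 with hk
  have hmk : m = k + 1 := (Nat.succ_pred_eq_of_pos hm).symm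
  have hmR : (m:ℝ) = (k:ℝ) + 1 := by rw [hmk]; push_cast; ring
  have hm0 : (0:ℝ) < (m:ℝ) := by positivity
  have hxθ : θ * x = 1 := by rw [hx]; field_simp
  have hprod : ∏ i ∈ Finset.range m, ((i:ℝ)*θ + 1)
      = θ^k * (k.factorial : ℝ) * ∏ i ∈ Finset.range k, (1 + x/(i+1)) := by
    rw [hmk, Finset.prod_range_succ']
    push_cast
    have hterm : ∀ i : ℕ, (((i:ℝ)+1)*θ + 1) = θ * ((i:ℝ)+1) * (1 + x/(i+1)) := by
      intro i
      have h1 : ((i:ℝ)+1) ≠ 0 := by positivity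
      rw [show θ * ((i:ℝ)+1) * (1 + x/(i+1)) = θ*((i:ℝ)+1) + θ*x*(((i:ℝ)+1)/((i:ℝ)+1)) from by
        ring, div_self h1, hxθ]
      ring
    simp only [hterm]
    rw [Finset.prod_mul_distrib, Finset.prod_mul_distrib]
    have h2 : ∏ _i ∈ Finset.range k, θ = θ^k := by simp
    have h3 : ∏ i ∈ Finset.range k, ((i:ℝ)+1) = (k.factorial : ℝ) := by
      exact_mod_cast Finset.prod_range_add_one_eq_factorial k
    rw [h2, h3]
    ring
  have hP : Real.exp (x * Real.log m - x^2 * π^2 / 12)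
      ≤ ∏ i ∈ Finset.range k, (1 + x/(i+1)) := by
    have hpos : ∀ i ∈ Finset.range k, (0:ℝ) < 1 + x/(i+1) := by
      intro i _; positivity
    have hPexp : ∏ i ∈ Finset.range k, (1 + x/(i+1))
        = Real.exp (∑ i ∈ Finset.range k, Real.log (1 + x/(i+1))) := by
      rw [Real.exp_sum]
      exact Finset.prod_congr rfl fun i hi => (Real.exp_log (hpos i hi)).symm
    rw [hPexp, Real.exp_le_exp]
    have step1 : ∑ i ∈ Finset.range k, (x/(i+1) - (x/(i+1))^2/2)
        ≤ ∑ i ∈ Finset.range k, Real.log (1 + x/(i+1)) :=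
      Finset.sum_le_sum fun i _ => log_quad (by positivity)
    have step2 : ∑ i ∈ Finset.range k, (x/(i+1) - (x/(i+1))^2/2)
        = x * (∑ i ∈ Finset.range k, (1:ℝ)/(i+1))
          - x^2/2 * (∑ i ∈ Finset.range k, (1:ℝ)/(i+1)^2) := by
      rw [Finset.mul_sum, Finset.mul_sum, ← Finset.sum_sub_distrib]
      apply Finset.sum_congr rfl
      intro i _
      have h1 : ((i:ℝ)+1) ≠ 0 := by positivity
      field_simp
    have h4 : Real.log m ≤ ∑ i ∈ Finset.range k, (1:ℝ)/(i+1) := by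
      have := log_le_harmonic k
      rwa [← hmR] at this
    have h5 := sum_inv_sq_le k
    nlinarith [step1, step2, h4, h5, sq_nonneg x, hx0]
  have hθpow : θ ^ (2*(m:ℝ) - 1) = θ^m * θ^k := by
    have he : (2*(m:ℝ) - 1) = ((m + k : ℕ) : ℝ) := by push_cast; rw [hmR]; ring
    rw [he, Real.rpow_natCast, pow_add]
  have hmx : (m:ℝ) ^ (x - 1) * Real.exp (-(π^2)/(12*θ^2))
      = (m:ℝ)⁻¹ * Real.exp (x * Real.log m - x^2 * π^2 / 12) := by
    rw [Real.rpow_def_of_pos hm0,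
      show ((m:ℝ))⁻¹ = Real.exp (-Real.log m) from by rw [Real.exp_neg, Real.exp_log hm0],
      ← Real.exp_add, ← Real.exp_add]
    congr 1
    rw [hx]
    have hθ2 : θ ≠ 0 := hθ.ne'
    field_simp
    ring
  have hfact : (m.factorial : ℝ) = (m:ℝ) * (k.factorial : ℝ) := by
    rw [hmk]
    push_cast [Nat.factorial_succ]
    ring
  rw [hprod, hθpow, hfact]
  calc ((m:ℝ) * k.factorial)^2 * (θ^m * θ^k) * (m:ℝ) ^ (x - 1) * Real.exp (-(π^2)/(12*θ^2))
      = ((m:ℝ) * k.factorial)^2 * (θ^m * θ^k) * ((m:ℝ) ^ (x - 1) * Real.exp (-(π^2)/(12*θ^2))) := by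
        ring
    _ = ((m:ℝ) * k.factorial)^2 * (θ^m * θ^k) * ((m:ℝ)⁻¹ * Real.exp (x * Real.log m - x^2 * π^2 / 12)) := by
        rw [hmx]
    _ = ((m:ℝ) * k.factorial * (θ^m * (θ^k * k.factorial))) * Real.exp (x * Real.log m - x^2 * π^2 / 12) := by
        field_simp
    _ ≤ ((m:ℝ) * k.factorial * (θ^m * (θ^k * k.factorial))) * ∏ i ∈ Finset.range k, (1 + x/(i+1)) := by
        apply mul_le_mul_of_nonneg_left hP
        positivity
    _ = (m:ℝ) * k.factorial * θ^m * (θ^k * k.factorial * ∏ i ∈ Finset.range k, (1 + x/(i+1))) := by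
        ring

/-! ### Auxiliary structural lemmas -/

noncomputable def rowProd (θ : ℝ) (n : ℕ) (l : ℕ → ℕ) (i : ℕ) : ℝ :=
  ∏ j ∈ Finset.range (l i),
    ((((l i : ℝ) - j - 1) + 1) * θ + ((conjPart n l j : ℝ) - i - 1)) *
      (((l i : ℝ) - j - 1) * θ + ((conjPart n l j : ℝ) - i - 1) + 1)

lemma jfun_eq_prod_row (θ : ℝ) (n : ℕ) (l : ℕ → ℕ) :
    jfun θ n l = ∏ i ∈ Finset.range n, rowProd θ n l i := rfl

section Struct
variable {n : ℕ} {l : ℕ → ℕ}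

lemma l0_pos (hn : 1 ≤ n) (hl : IsPartitionOf n l) : 1 ≤ l 0 := by
  by_contra h
  push_neg at h
  have hs := hl.2.2
  have h0 : l 0 = 0 := by omega
  have hz : ∑ i ∈ Finset.range n, l i = 0 := by
    apply Finset.sum_eq_zero
    intro i _
    have := hl.1 (Nat.zero_le i)
    omega
  omega

lemma l0_le (hn : 1 ≤ n) (hl : IsPartitionOf n l) : l 0 ≤ n := by
  have hs := hl.2.2
  have := Finset.single_le_sum (f := l) (fun t _ => Nat.zero_le _)
    (Finset.mem_range.2 (by omega : 0 < n))
  omega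

lemma parts_zero (hn : 1 ≤ n) (hl : IsPartitionOf n l) :
    ∀ i, n - l 0 < i → l i = 0 := by
  intro i hi
  rcases le_or_gt n i with h | h
  · exact hl.2.1 i h
  by_contra hne
  have h1 : 1 ≤ l i := by omega
  have hsub : Finset.range (i+1) ⊆ Finset.range n := Finset.range_subset_range.2 (by omega)
  have hle : ∑ t ∈ Finset.range (i+1), l t ≤ n := by
    rw [← hl.2.2]
    exact Finset.sum_le_sum_of_subset hsub
  rw [Finset.sum_range_succ' l i] at hle
  have hge : i ≤ ∑ t ∈ Finset.range i, l (t+1) := by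
    calc i = ∑ _t ∈ Finset.range i, 1 := by simp
    _ ≤ ∑ t ∈ Finset.range i, l (t+1) := by
        apply Finset.sum_le_sum
        intro t ht
        simp only [Finset.mem_range] at ht
        have := hl.1 (by omega : t + 1 ≤ i)
        omega
  have hl0 := l0_le hn hl
  omega

lemma conj_split (hn : 1 ≤ n) (hl : IsPartitionOf n l) {j : ℕ} (hj : j < l 0) :
    conjPart n l j = conjPart (n - l 0) (fun k => l (k + 1)) j + 1 := by
  have hl0 := l0_pos hn hl
  have hl0n := l0_le hn hl
  unfold conjPart
  have hset : (Finset.range n).filter (fun i => j < l i)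
      = insert 0 (((Finset.range (n - l 0)).filter (fun k => j < l (k+1))).image (· + 1)) := by
    ext i
    simp only [Finset.mem_insert, Finset.mem_image, Finset.mem_filter, Finset.mem_range]
    constructor
    · rintro ⟨hin, hji⟩
      rcases Nat.eq_zero_or_pos i with h0 | h0
      · exact Or.inl h0
      · refine Or.inr ⟨i - 1, ⟨?_, ?_⟩, by omega⟩
        · by_contra hc
          push_neg at hc
          have : l i = 0 := parts_zero hn hl i (by omega)
          omega
        · have hii : i - 1 + 1 = i := by omega
          rw [hii]; exact hji
    · rintro (h0 | ⟨k, ⟨hk, hjk⟩, rfl⟩)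
      · subst h0; exact ⟨by omega, hj⟩
      · exact ⟨by omega, hjk⟩
  have hnot : (0:ℕ) ∉ ((Finset.range (n - l 0)).filter (fun k => j < l (k+1))).image (· + 1) := by
    simp only [Finset.mem_image, Finset.mem_filter, Finset.mem_range]
    rintro ⟨k, _, hk⟩
    omega
  rw [hset, Finset.card_insert_of_notMem hnot,
    Finset.card_image_of_injective _ (add_left_injective 1)]

lemma mu_partition (hn : 1 ≤ n) (hl : IsPartitionOf n l) :
    IsPartitionOf (n - l 0) (fun k => l (k + 1)) := by
  have hl0 := l0_pos hn hl
  have hl0n := l0_le hn hl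
  refine ⟨fun a b hab => hl.1 (by omega), fun k hk => parts_zero hn hl _ (by omega), ?_⟩
  have h1 : ∑ i ∈ Finset.range ((n-1)+1), l i = n := by
    rw [show (n-1)+1 = n by omega]; exact hl.2.2
  rw [Finset.sum_range_succ' l (n-1)] at h1
  have h3 : ∑ k ∈ Finset.range (n - l 0), l (k+1) = ∑ k ∈ Finset.range (n-1), l (k+1) := by
    apply Finset.sum_subset (Finset.range_subset_range.2 (by omega))
    intro k _ hk
    simp only [Finset.mem_range, not_lt] at hk
    exact parts_zero hn hl _ (by omega)
  show ∑ k ∈ Finset.range (n - l 0), l (k+1) = n - l 0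
  omega

lemma jfun_nonneg {θ : ℝ} (hθ : 0 < θ) {N : ℕ} {μ : ℕ → ℕ} (hμ : IsPartitionOf N μ) :
    0 ≤ jfun θ N μ := by
  apply Finset.prod_nonneg
  intro i hi
  apply Finset.prod_nonneg
  intro j hj
  simp only [Finset.mem_range] at hi hj
  have ha : (0:ℝ) ≤ (μ i : ℝ) - j - 1 := by
    have h1 : j + 1 ≤ μ i := hj
    have h2 : ((j:ℝ)) + 1 ≤ (μ i : ℝ) := by exact_mod_cast h1
    linarith
  have hc : (i:ℕ) + 1 ≤ conjPart N μ j := by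
    unfold conjPart
    calc i + 1 = (Finset.range (i+1)).card := by simp
    _ ≤ _ := by
        apply Finset.card_le_card
        intro t ht
        simp only [Finset.mem_range] at ht
        simp only [Finset.mem_filter, Finset.mem_range]
        exact ⟨by omega, lt_of_lt_of_le hj (hμ.1 (by omega))⟩
  have hc' : (0:ℝ) ≤ (conjPart N μ j : ℝ) - i - 1 := by
    have h3 : ((i:ℝ)) + 1 ≤ (conjPart N μ j : ℝ) := by exact_mod_cast hc
    linarith
  have h1 : (0:ℝ) ≤ ((μ i : ℝ) - j - 1 + 1) * θ + ((conjPart N μ j : ℝ) - i - 1) := by positivity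
  have h2 : (0:ℝ) ≤ ((μ i : ℝ) - j - 1) * θ + ((conjPart N μ j : ℝ) - i - 1) + 1 := by positivity
  exact mul_nonneg h1 h2

lemma jfun_split (θ : ℝ) (hn : 1 ≤ n) (hl : IsPartitionOf n l) :
    jfun θ n l
      = (∏ j ∈ Finset.range (l 0),
          ((((l 0 : ℝ) - j - 1) + 1) * θ + ((conjPart n l j : ℝ) - 1)) *
            (((l 0 : ℝ) - j - 1) * θ + ((conjPart n l j : ℝ) - 1) + 1))
        * jfun θ (n - l 0) (fun k => l (k + 1)) := by
  have hl0 := l0_pos hn hl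
  have hl0n := l0_le hn hl
  have h1 : jfun θ n l
      = (∏ k ∈ Finset.range (n-1), rowProd θ n l (k+1)) * rowProd θ n l 0 := by
    rw [jfun_eq_prod_row]
    have h := Finset.prod_range_succ' (rowProd θ n l) (n-1)
    rw [show (n-1)+1 = n by omega] at h
    exact h
  have h2 : ∏ k ∈ Finset.range (n-1), rowProd θ n l (k+1)
      = ∏ k ∈ Finset.range (n - l 0), rowProd θ n l (k+1) := by
    symm
    apply Finset.prod_subset (Finset.range_subset_range.2 (by omega))
    intro k _ hk
    simp only [Finset.mem_range, not_lt] at hk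
    unfold rowProd
    rw [parts_zero hn hl (k+1) (by omega)]
    simp
  have h3 : ∏ k ∈ Finset.range (n - l 0), rowProd θ n l (k+1)
      = jfun θ (n - l 0) (fun k => l (k + 1)) := by
    rw [jfun_eq_prod_row]
    apply Finset.prod_congr rfl
    intro k hk
    simp only [Finset.mem_range] at hk
    unfold rowProd
    apply Finset.prod_congr rfl
    intro j hj
    simp only [Finset.mem_range] at hj
    have hjl0 : j < l 0 := lt_of_lt_of_le hj (hl.1 (Nat.zero_le _))
    rw [conj_split hn hl hjl0]
    push_cast
    ring
  have h4 : rowProd θ n l 0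
      = ∏ j ∈ Finset.range (l 0),
          ((((l 0 : ℝ) - j - 1) + 1) * θ + ((conjPart n l j : ℝ) - 1)) *
            (((l 0 : ℝ) - j - 1) * θ + ((conjPart n l j : ℝ) - 1) + 1) := by
    unfold rowProd
    apply Finset.prod_congr rfl
    intro j hj
    norm_num
  rw [h1, h2, h3, h4, mul_comm]

lemma conj_ge_one (hn : 1 ≤ n) {j : ℕ} (hj : j < l 0) :
    1 ≤ conjPart n l j := by
  unfold conjPart
  have hmem : (0:ℕ) ∈ (Finset.range n).filter (fun i => j < l i) :=
    Finset.mem_filter.2 ⟨Finset.mem_range.2 (by omega), hj⟩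
  exact Finset.card_pos.2 ⟨0, hmem⟩

end Struct

lemma reflect_fac (m : ℕ) (hm : 1 ≤ m) :
    ∏ j ∈ Finset.range m, (((m:ℝ) - j - 1) + 1) = (m.factorial : ℝ) := by
  have h := Finset.prod_range_reflect (fun i => ((i:ℝ) + 1)) m
  have h2 : ∀ j ∈ Finset.range m, ((((m - 1 - j : ℕ)):ℝ) + 1) = (((m:ℝ) - j - 1) + 1) := by
    intro j hj
    simp only [Finset.mem_range] at hj
    have h1 : j ≤ m - 1 := by omega
    rw [Nat.cast_sub h1, Nat.cast_sub (by omega : 1 ≤ m)]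
    push_cast
    ring
  rw [Finset.prod_congr rfl h2] at h
  rw [h]
  exact_mod_cast Finset.prod_range_add_one_eq_factorial m

lemma reflect_shift (θ : ℝ) (m : ℕ) (hm : 1 ≤ m) :
    ∏ j ∈ Finset.range m, (((m:ℝ) - j - 1) * θ + 1)
      = ∏ i ∈ Finset.range m, ((i:ℝ) * θ + 1) := by
  have h := Finset.prod_range_reflect (fun i => ((i:ℝ) * θ + 1)) m
  have h2 : ∀ j ∈ Finset.range m, ((((m - 1 - j : ℕ)):ℝ) * θ + 1)
      = (((m:ℝ) - j - 1) * θ + 1) := by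
    intro j hj
    simp only [Finset.mem_range] at hj
    have h1 : j ≤ m - 1 := by omega
    rw [Nat.cast_sub h1, Nat.cast_sub (by omega : 1 ≤ m)]
    push_cast
    ring
  rw [Finset.prod_congr rfl h2] at h
  exact h

/-- removing the first row of `λ` gives the inductive lower bound
`j_λ(θ) ≥ (λ₁!)² θ^{2λ₁−1} λ₁^{1/θ−1} exp(−π²/(12θ²)) j_μ(θ)` where
`μ = (λ₂, λ₃, …)`. -/
theorem jfun_first_row_split
    (θ : ℝ) (hθ : 0 < θ) (n : ℕ) (hn : 1 ≤ n) (l : ℕ → ℕ)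
    (hl : IsPartitionOf n l) :
    ((l 0).factorial : ℝ) ^ 2 * θ ^ (2 * (l 0 : ℝ) - 1) * (l 0 : ℝ) ^ (1 / θ - 1) *
        Real.exp (-(Real.pi ^ 2) / (12 * θ ^ 2)) * jfun θ (n - l 0) (fun k => l (k + 1))
      ≤ jfun θ n l := by
  have hl0 := l0_pos hn hl
  have hC : ((l 0).factorial : ℝ) ^ 2 * θ ^ (2 * (l 0 : ℝ) - 1) * (l 0 : ℝ) ^ (1 / θ - 1) *
      Real.exp (-(Real.pi ^ 2) / (12 * θ ^ 2))
      ≤ ∏ j ∈ Finset.range (l 0),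
          ((((l 0 : ℝ) - j - 1) + 1) * θ + ((conjPart n l j : ℝ) - 1)) *
            (((l 0 : ℝ) - j - 1) * θ + ((conjPart n l j : ℝ) - 1) + 1) := by
    have hmid : ((l 0).factorial : ℝ) * θ ^ (l 0) * ∏ i ∈ Finset.range (l 0), ((i:ℝ)*θ + 1)
        = ∏ j ∈ Finset.range (l 0),
            (((((l 0 : ℝ) - j - 1) + 1) * θ) * ((((l 0 : ℝ) - j - 1)) * θ + 1)) := by
      rw [Finset.prod_mul_distrib, Finset.prod_mul_distrib, reflect_fac (l 0) hl0,
        Finset.prod_const, reflect_shift θ (l 0) hl0, Finset.card_range]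
    calc ((l 0).factorial : ℝ) ^ 2 * θ ^ (2 * (l 0 : ℝ) - 1) * (l 0 : ℝ) ^ (1 / θ - 1) *
          Real.exp (-(Real.pi ^ 2) / (12 * θ ^ 2))
        ≤ ((l 0).factorial : ℝ) * θ ^ (l 0) * ∏ i ∈ Finset.range (l 0), ((i:ℝ)*θ + 1) :=
          keyC θ hθ (l 0) hl0
      _ = ∏ j ∈ Finset.range (l 0),
            (((((l 0 : ℝ) - j - 1) + 1) * θ) * ((((l 0 : ℝ) - j - 1)) * θ + 1)) := hmid
      _ ≤ _ := by
          apply Finset.prod_le_prod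
          · intro j hj
            simp only [Finset.mem_range] at hj
            have haj : (0:ℝ) ≤ (l 0 : ℝ) - j - 1 := by
              have : ((j:ℝ)) + 1 ≤ (l 0 : ℝ) := by exact_mod_cast hj
              linarith
            have e1 : (0:ℝ) ≤ (((l 0 : ℝ) - j - 1) + 1) * θ := by positivity
            have e2 : (0:ℝ) ≤ ((l 0 : ℝ) - j - 1) * θ + 1 := by positivity
            exact mul_nonneg e1 e2
          · intro j hj
            simp only [Finset.mem_range] at hj
            have haj : (0:ℝ) ≤ (l 0 : ℝ) - j - 1 := by
              have : ((j:ℝ)) + 1 ≤ (l 0 : ℝ) := by exact_mod_cast hj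
              linarith
            have hcj : (0:ℝ) ≤ (conjPart n l j : ℝ) - 1 := by
              have := conj_ge_one (l := l) hn hj
              have h1 : (1:ℝ) ≤ (conjPart n l j : ℝ) := by exact_mod_cast this
              linarith
            apply mul_le_mul
            · linarith
            · linarith
            · positivity
            · positivity
  rw [jfun_split θ hn hl]
  exact mul_le_mul_of_nonneg_right hC (jfun_nonneg hθ (mu_partition hn hl))
end
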